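/- arXiv:1111.0881 — 2 statements merged into one kernel-verified Lean document; each statement's English description precedes it below -/
import Mathlib

section
/- For real μ > -1, a > 0, and b > 0, the integral ∫₀^∞ x^μ · exp(-a x²) · ln(b x) dx equals (1/(4 a^((μ+1)/2))) · Γ((μ+1)/2) · (ln(b²/a) + ψ((μ+1)/2)), where ψ is the digamma function. -/
open Real MeasureTheory

/-- The digamma function ψ = Γ'/Γ. -/
noncomputable def digamma (x : ℝ) : ℝ := deriv Real.Gamma x / Real.Gamma x

/-- Derivative of the real Gamma function as an integral, for `0 < s`. -/
lemma hasDerivAt_realGamma {s : ℝ} (hs : 0 < s) :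
    HasDerivAt Real.Gamma
      (∫ t in Set.Ioi (0 : ℝ), Real.exp (-t) * t ^ (s - 1) * Real.log t) s := by
  have hs' : 0 < (s : ℂ).re := by simpa using hs
  have h1 := Complex.hasDerivAt_GammaIntegral hs'
  have heq : Complex.Gamma =ᶠ[nhds (s : ℂ)] Complex.GammaIntegral := by
    have hop : IsOpen {z : ℂ | 0 < z.re} :=
      (isOpen_Ioi (a := (0:ℝ))).preimage Complex.continuous_re
    filter_upwards [hop.mem_nhds hs'] with z hz using Complex.Gamma_eq_integral hz
  have h2 : HasDerivAt Complex.Gamma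
      (∫ t : ℝ in Set.Ioi 0, (t : ℂ) ^ ((s : ℂ) - 1) * (Real.log t * Real.exp (-t))) (s : ℂ) :=
    h1.congr_of_eventuallyEq heq
  have h3 : (∫ t : ℝ in Set.Ioi 0, (t : ℂ) ^ ((s : ℂ) - 1) * (Real.log t * Real.exp (-t))) =
      ((∫ t in Set.Ioi (0 : ℝ), Real.exp (-t) * t ^ (s - 1) * Real.log t : ℝ) : ℂ) := by
    have step : (∫ t : ℝ in Set.Ioi 0, (t : ℂ) ^ ((s : ℂ) - 1) * (Real.log t * Real.exp (-t))) =
        ∫ t in Set.Ioi (0 : ℝ), ((Real.exp (-t) * t ^ (s - 1) * Real.log t : ℝ) : ℂ) := by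
      refine setIntegral_congr_fun measurableSet_Ioi fun t ht => ?_
      have hcp : (t : ℂ) ^ ((s : ℂ) - 1) = ((t ^ (s - 1) : ℝ) : ℂ) := by
        rw [show ((s : ℂ) - 1) = ((s - 1 : ℝ) : ℂ) by push_cast; ring,
          ← Complex.ofReal_cpow (le_of_lt ht)]
      rw [hcp]
      push_cast
      ring
    rw [step]
    exact integral_ofReal
  rw [h3] at h2
  have h4 := h2.real_of_complex
  exact h4

/-- Integrability of the log-twisted Gamma integrand. -/
lemma integrableOn_gamma_log {s : ℝ} (hs : 0 < s) :
    IntegrableOn (fun t => Real.exp (-t) * t ^ (s - 1) * Real.log t) (Set.Ioi 0) := by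
  have h1 := Real.GammaIntegral_convergent (show (0:ℝ) < s + s / 2 by linarith)
  have h2 := Real.GammaIntegral_convergent (half_pos hs)
  refine Integrable.mono' ((h1.add h2).const_mul (2 / s)) ?_ ?_
  · apply ContinuousOn.aestronglyMeasurable _ measurableSet_Ioi
    apply ContinuousOn.mul
    apply ContinuousOn.mul
    · exact (Real.continuous_exp.comp continuous_neg).continuousOn
    · exact fun t ht => (Real.continuousAt_rpow_const t _ (Or.inl (ne_of_gt ht))).continuousWithinAt
    · exact fun t ht => (Real.continuousAt_log (ne_of_gt ht)).continuousWithinAt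
  · filter_upwards [ae_restrict_mem measurableSet_Ioi] with t ht
    have ht0 : (0:ℝ) < t := ht
    have he : (0:ℝ) < s / 2 := half_pos hs
    have hlog : |Real.log t| ≤ (t ^ (s / 2) + t ^ (-(s / 2))) / (s / 2) := by
      have hA : 0 ≤ t ^ (s / 2) / (s / 2) := by positivity
      have hB : 0 ≤ t ^ (-(s / 2)) / (s / 2) := by positivity
      have hup : Real.log t ≤ t ^ (s / 2) / (s / 2) := Real.log_le_rpow_div ht0.le he
      have hdn : -Real.log t ≤ t ^ (-(s / 2)) / (s / 2) := by
        have := Real.log_le_rpow_div (le_of_lt (inv_pos.mpr ht0)) he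
        rwa [Real.log_inv, ← Real.rpow_neg_one, ← Real.rpow_mul ht0.le,
          show (-1 : ℝ) * (s / 2) = -(s / 2) by ring] at this
      rw [abs_le, add_div]
      constructor <;> linarith
    have hnorm : ‖Real.exp (-t) * t ^ (s - 1) * Real.log t‖ =
        Real.exp (-t) * t ^ (s - 1) * |Real.log t| := by
      rw [Real.norm_eq_abs, abs_mul, abs_mul, abs_of_pos (Real.exp_pos _),
        abs_of_nonneg (Real.rpow_nonneg ht0.le _)]
    rw [hnorm]
    have hb : Real.exp (-t) * t ^ (s - 1) * |Real.log t| ≤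
        Real.exp (-t) * t ^ (s - 1) * ((t ^ (s / 2) + t ^ (-(s / 2))) / (s / 2)) :=
      mul_le_mul_of_nonneg_left hlog (by positivity)
    refine hb.trans (le_of_eq ?_)
    simp only [Pi.add_apply]
    have e1 : t ^ (s + s / 2 - 1) = t ^ (s - 1) * t ^ (s / 2) := by
      rw [← Real.rpow_add ht0]; ring_nf
    have e2 : t ^ (s / 2 - 1) = t ^ (s - 1) * t ^ (-(s / 2)) := by
      rw [← Real.rpow_add ht0]; ring_nf
    rw [e1, e2]
    field_simp

/-- Substitution `t = a x²` in integrals over `Ioi 0`. -/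
lemma integral_comp_mul_sq (F : ℝ → ℝ) {a : ℝ} (ha : 0 < a) :
    ∫ x in Set.Ioi (0 : ℝ), (2 * x) * F (a * x ^ 2) =
      a⁻¹ * ∫ t in Set.Ioi (0 : ℝ), F t := by
  have h1 := integral_comp_rpow_Ioi_of_pos (g := fun y => F (a * y)) (p := 2) two_pos
  have h2 := integral_comp_mul_left_Ioi (fun t => F t) 0 ha
  rw [mul_zero] at h2
  rw [smul_eq_mul] at h2
  rw [← h2, ← h1]
  refine setIntegral_congr_fun measurableSet_Ioi fun x hx => ?_
  have hx0 : (0:ℝ) < x := hx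
  have e1 : x ^ ((2:ℝ) - 1) = x := by norm_num
  have e2 : x ^ (2:ℝ) = x ^ 2 := by
    rw [show (2:ℝ) = ((2:ℕ):ℝ) by norm_num, Real.rpow_natCast]
  rw [smul_eq_mul, e1, e2]

/-- For μ > -1, a > 0, b > 0:
∫₀^∞ x^μ exp(-a x²) ln(b x) dx = (1/(4 a^((μ+1)/2))) Γ((μ+1)/2) (ln(b²/a) + ψ((μ+1)/2)). -/
theorem stmt_1 (μ a b : ℝ) (hμ : -1 < μ) (ha : 0 < a) (hb : 0 < b) :
    ∫ x in Set.Ioi (0 : ℝ), x ^ μ * Real.exp (-a * x ^ 2) * Real.log (b * x) =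
      1 / (4 * a ^ ((μ + 1) / 2)) * Real.Gamma ((μ + 1) / 2) *
        (Real.log (b ^ 2 / a) + digamma ((μ + 1) / 2)) := by
  set s : ℝ := (μ + 1) / 2 with hs_def
  have hs : 0 < s := by simp only [hs_def]; linarith
  set G : ℝ → ℝ := fun t => a ^ (1 - s) *
    (((2 * Real.log b - Real.log a) / 4) * (Real.exp (-t) * t ^ (s - 1)) +
      (1 / 4) * (Real.exp (-t) * t ^ (s - 1) * Real.log t)) with hG_def
  have key : ∀ x ∈ Set.Ioi (0:ℝ),
      x ^ μ * Real.exp (-a * x ^ 2) * Real.log (b * x) = (2 * x) * G (a * x ^ 2) := by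
    intro x hx
    have hx0 : (0:ℝ) < x := hx
    have ht0 : 0 < a * x ^ 2 := by positivity
    have hrp : (a * x ^ 2) ^ (s - 1) = a ^ (s - 1) * x ^ (μ - 1) := by
      rw [Real.mul_rpow ha.le (by positivity)]
      congr 1
      rw [← Real.rpow_natCast x 2, ← Real.rpow_mul hx0.le]
      congr 1
      simp [hs_def]; ring
    have hlt : Real.log (a * x ^ 2) = Real.log a + 2 * Real.log x := by
      rw [Real.log_mul (ne_of_gt ha) (by positivity), Real.log_pow]
      norm_num
    have hlb : Real.log (b * x) = Real.log b + Real.log x :=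
      Real.log_mul (ne_of_gt hb) (ne_of_gt hx0)
    have hxm : x * x ^ (μ - 1) = x ^ μ := by
      have h := (Real.rpow_add hx0 1 (μ - 1)).symm
      rw [Real.rpow_one, show 1 + (μ - 1) = μ by ring] at h
      exact h
    have haa : a ^ (1 - s) * a ^ (s - 1) = 1 := by
      rw [← Real.rpow_add ha]; norm_num
    simp only [hG_def, hrp, hlt, hlb, neg_mul]
    linear_combination (-(Real.exp (-(a * x ^ 2)) * (Real.log b + Real.log x))) * hxm +
      (-(x * Real.exp (-(a * x ^ 2)) * x ^ (μ - 1) * (Real.log b + Real.log x))) * haa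
  rw [setIntegral_congr_fun measurableSet_Ioi key, integral_comp_mul_sq G ha]
  have hf1 := Real.GammaIntegral_convergent hs
  have hf2 := integrableOn_gamma_log hs
  have hsplit : ∫ t in Set.Ioi (0:ℝ), G t =
      a ^ (1 - s) * (((2 * Real.log b - Real.log a) / 4) * Real.Gamma s +
        (1 / 4) * deriv Real.Gamma s) := by
    simp only [hG_def]
    rw [integral_const_mul]
    congr 1
    rw [integral_add (hf1.const_mul _) (hf2.const_mul _), integral_const_mul, integral_const_mul,
      ← Real.Gamma_eq_integral hs, (hasDerivAt_realGamma hs).deriv]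
  rw [hsplit]
  have hGpos : 0 < Real.Gamma s := Real.Gamma_pos_of_pos hs
  have hlog2 : Real.log (b ^ 2 / a) = 2 * Real.log b - Real.log a := by
    rw [Real.log_div (by positivity) (ne_of_gt ha), Real.log_pow]
    norm_num
  have hap : (0:ℝ) < a ^ s := Real.rpow_pos_of_pos ha s
  have haa2 : a⁻¹ * a ^ (1 - s) = (a ^ s)⁻¹ := by
    rw [← Real.rpow_neg_one, ← Real.rpow_add ha, ← Real.rpow_neg ha.le]
    congr 1
    ring
  rw [digamma, hlog2, ← mul_assoc, haa2]
  field_simp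
end

section
/- For the Tricomi–Bessel function C_ν, the integral ∫₀^∞ C_ν(x) dx (as an improper integral) equals 1/Γ(ν) for real ν > 1. -/
open Filter Topology Real

set_option maxHeartbeats 1000000

/-- The Tricomi–Bessel function C_ν(x) = Σ_{k≥0} (-1)^k x^k / (k! Γ(ν+k+1)). -/
noncomputable def tricomiC (ν x : ℝ) : ℝ :=
  ∑' k : ℕ, (-1) ^ k * x ^ k / ((k.factorial : ℝ) * Real.Gamma (ν + k + 1))


lemma gamma_lb {y : ℝ} (hy : 1 ≤ y) : Real.exp (-1) ≤ Real.Gamma y := by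
  have hy0 : 0 < y := lt_of_lt_of_le one_pos hy
  rw [Real.Gamma_eq_integral hy0]
  have hint : MeasureTheory.IntegrableOn (fun x => Real.exp (-x)) (Set.Ioi (1:ℝ)) := by
    have := exp_neg_integrableOn_Ioi 1 (one_pos)
    simpa using this
  have h1 : ∫ x in Set.Ioi (1:ℝ), Real.exp (-x) ≤ ∫ x in Set.Ioi (1:ℝ), Real.exp (-x) * x ^ (y-1) := by
    apply MeasureTheory.setIntegral_mono_on hint
      ((Real.GammaIntegral_convergent hy0).mono_set (Set.Ioi_subset_Ioi zero_le_one))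
      measurableSet_Ioi
    intro x hx
    simp only [Set.mem_Ioi] at hx
    nlinarith [Real.rpow_le_rpow (by positivity : (0:ℝ) ≤ 1) (le_of_lt hx) (by linarith : 0 ≤ y - 1), Real.one_rpow (y-1), Real.exp_pos (-x)]
  have h2 : ∫ x in Set.Ioi (1:ℝ), Real.exp (-x) * x ^ (y-1) ≤ ∫ x in Set.Ioi (0:ℝ), Real.exp (-x) * x ^ (y-1) := by
    apply MeasureTheory.setIntegral_mono_set (Real.GammaIntegral_convergent hy0)
    · filter_upwards [MeasureTheory.ae_restrict_mem measurableSet_Ioi] with x hx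
      simp only [Set.mem_Ioi] at hx
      have : (0:ℝ) ≤ x ^ (y-1) := Real.rpow_nonneg (le_of_lt hx) _
      positivity
    · exact Filter.Eventually.of_forall (fun x hx => lt_trans one_pos hx)
  calc Real.exp (-1) = ∫ x in Set.Ioi (1:ℝ), Real.exp (-x) := (integral_exp_neg_Ioi 1).symm
    _ ≤ _ := le_trans h1 h2

lemma gamma_lb' {μ : ℝ} (hμ : 0 ≤ μ) (k : ℕ) : Real.exp (-1) ≤ Real.Gamma (μ + k + 1) := by
  apply gamma_lb; have : (0:ℝ) ≤ k := Nat.cast_nonneg k; linarith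


lemma inv_gamma_le {μ : ℝ} (hμ : 0 ≤ μ) (k : ℕ) :
    1 / Real.Gamma (μ + k + 1) ≤ Real.exp 1 := by
  have h := gamma_lb' hμ k
  have hpos : 0 < Real.Gamma (μ + k + 1) := lt_of_lt_of_le (Real.exp_pos _) h
  rw [div_le_iff₀ hpos]
  calc (1:ℝ) = Real.exp 1 * Real.exp (-1) := by rw [← Real.exp_add]; norm_num
    _ ≤ Real.exp 1 * Real.Gamma (μ + k + 1) := by
        exact mul_le_mul_of_nonneg_left h (le_of_lt (Real.exp_pos _))


lemma abs_term_le {μ : ℝ} (hμ : 0 ≤ μ) (x : ℝ) (k : ℕ) :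
    ‖(-1:ℝ)^k * x^k / (k.factorial * Real.Gamma (μ + k + 1))‖
      ≤ Real.exp 1 * (|x|^k / k.factorial) := by
  have hg : 0 < Real.Gamma (μ + k + 1) := lt_of_lt_of_le (Real.exp_pos _) (gamma_lb' hμ k)
  have hf : (0:ℝ) < k.factorial := by exact_mod_cast k.factorial_pos
  rw [Real.norm_eq_abs, abs_div, abs_mul, abs_pow, abs_pow, abs_neg, abs_one, one_pow, one_mul,
    abs_mul, Nat.abs_cast, abs_of_pos hg]
  rw [div_le_iff₀ (by positivity)]
  have h1 := inv_gamma_le hμ k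
  rw [div_le_iff₀ hg] at h1
  calc |x|^k = |x|^k * 1 := (mul_one _).symm
    _ ≤ |x|^k * (Real.exp 1 * Real.Gamma (μ + k + 1)) := by
        apply mul_le_mul_of_nonneg_left (by simpa using h1) (by positivity)
    _ = Real.exp 1 * (|x|^k / ↑k.factorial) * (↑k.factorial * Real.Gamma (μ + k + 1)) := by
        field_simp
  

lemma summable_tricomi {μ : ℝ} (hμ : 0 ≤ μ) (x : ℝ) :
    Summable (fun k : ℕ => (-1:ℝ)^k * x^k / (k.factorial * Real.Gamma (μ + k + 1))) := by
  apply Summable.of_norm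
  apply Summable.of_nonneg_of_le (fun k => norm_nonneg _) (abs_term_le hμ x)
  simpa [mul_div_assoc] using (Real.summable_pow_div_factorial |x|).mul_left (Real.exp 1)


lemma summable_kRk (R : ℝ) :
    Summable (fun k : ℕ => Real.exp 1 * (k * R^(k-1) / k.factorial)) := by
  rw [← summable_nat_add_iff 1]
  have : (fun k : ℕ => Real.exp 1 * (↑(k+1) * R^(k+1-1) / (k+1).factorial))
      = fun k : ℕ => Real.exp 1 * (R^k / k.factorial) := by
    funext k
    congr 1
    rw [Nat.add_sub_cancel, Nat.factorial_succ]
    push_cast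
    field_simp
  rw [this]
  simpa [mul_div_assoc] using (Real.summable_pow_div_factorial R).mul_left (Real.exp 1)


lemma gamma_pos' {μ : ℝ} (hμ : 0 ≤ μ) (k : ℕ) : 0 < Real.Gamma (μ + k + 1) :=
  lt_of_lt_of_le (Real.exp_pos _) (gamma_lb' hμ k)


lemma abs_dterm_le {μ : ℝ} (hμ : 0 ≤ μ) {y R : ℝ} (hyR : |y| ≤ R) (k : ℕ) :
    ‖(-1:ℝ)^k * (k * y^(k-1)) / (k.factorial * Real.Gamma (μ + k + 1))‖
      ≤ Real.exp 1 * (k * R^(k-1) / k.factorial) := by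
  have hg := gamma_pos' hμ k
  have hf : (0:ℝ) < k.factorial := by exact_mod_cast k.factorial_pos
  have hR : 0 ≤ R := le_trans (abs_nonneg y) hyR
  have hyk : |y|^(k-1) ≤ R^(k-1) := pow_le_pow_left₀ (abs_nonneg y) hyR _
  rw [Real.norm_eq_abs, abs_div, abs_mul, abs_pow, abs_neg, abs_one, one_pow, one_mul,
    abs_mul, Nat.abs_cast, abs_pow, abs_mul, Nat.abs_cast, abs_of_pos hg]
  rw [div_le_iff₀ (by positivity)]
  have h1 := inv_gamma_le hμ k
  rw [div_le_iff₀ hg] at h1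
  calc (k:ℝ) * |y|^(k-1) ≤ (k * R^(k-1)) * (Real.exp 1 * Real.Gamma (μ + k + 1)) := by
        have : (k:ℝ) * |y|^(k-1) ≤ k * R^(k-1) :=
          mul_le_mul_of_nonneg_left hyk (Nat.cast_nonneg k)
        calc (k:ℝ) * |y|^(k-1) = (k * |y|^(k-1)) * 1 := (mul_one _).symm
          _ ≤ (k * R^(k-1)) * (Real.exp 1 * Real.Gamma (μ + k + 1)) := by
              apply mul_le_mul this (by simpa using h1) zero_le_one (by positivity)
    _ = Real.exp 1 * (↑k * R^(k-1) / ↑k.factorial) * (↑k.factorial * Real.Gamma (μ + k + 1)) := by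
        field_simp
  

lemma hasDerivAt_tricomi {μ : ℝ} (hμ : 0 ≤ μ) (x : ℝ) :
    HasDerivAt (tricomiC μ) (-(tricomiC (μ+1) x)) x := by
  set R : ℝ := |x| + 1 with hR
  have hxR : x ∈ Set.Ioo (-R) R := by
    constructor <;> [nlinarith [abs_nonneg x, neg_abs_le x]; nlinarith [le_abs_self x]]
  have key : HasDerivAt (fun z => ∑' k : ℕ, (-1:ℝ)^k * z^k / (k.factorial * Real.Gamma (μ + k + 1)))
      (∑' k : ℕ, (-1:ℝ)^k * (k * x^(k-1)) / (k.factorial * Real.Gamma (μ + k + 1))) x := by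
    apply hasDerivAt_tsum_of_isPreconnected (summable_kRk R) isOpen_Ioo
      (convex_Ioo (-R) R).isPreconnected
      (g' := fun (k : ℕ) (y : ℝ) => (-1:ℝ)^k * (k * y^(k-1)) / (k.factorial * Real.Gamma (μ + k + 1)))
      (fun k y _ => ((hasDerivAt_pow k y).const_mul ((-1:ℝ)^k)).div_const _)
      (fun k y hy => abs_dterm_le hμ (le_of_lt (abs_lt.mpr ⟨hy.1, hy.2⟩)) k)
      hxR (summable_tricomi hμ x) hxR
  have hsum : Summable (fun k : ℕ => (-1:ℝ)^k * (k * x^(k-1)) / (k.factorial * Real.Gamma (μ + k + 1))) := by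
    apply Summable.of_norm
    exact Summable.of_nonneg_of_le (fun k => norm_nonneg _)
      (fun k => abs_dterm_le hμ (le_refl |x|) k) (summable_kRk |x|)
  have hval : (∑' k : ℕ, (-1:ℝ)^k * (k * x^(k-1)) / (k.factorial * Real.Gamma (μ + k + 1)))
      = -(tricomiC (μ+1) x) := by
    rw [hsum.tsum_eq_zero_add]
    simp only [Nat.cast_zero, zero_mul, mul_zero, zero_div, zero_add, pow_zero, one_mul]
    have hterm : ∀ k : ℕ, (-1:ℝ)^(k+1) * (↑(k+1) * x^(k+1-1)) / ((k+1).factorial * Real.Gamma (μ + ↑(k+1) + 1))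
        = -((-1:ℝ)^k * x^k / (k.factorial * Real.Gamma ((μ+1) + k + 1))) := by
      intro k
      have hΓ : μ + (↑(k+1):ℝ) + 1 = (μ+1) + ↑k + 1 := by push_cast; ring
      rw [hΓ, Nat.add_sub_cancel, pow_succ, Nat.factorial_succ]
      have hg := gamma_pos' (by linarith : (0:ℝ) ≤ μ + 1) k
      have hf : ((k.factorial:ℝ)) ≠ 0 := by positivity
      have hk1 : ((k:ℝ)+1) ≠ 0 := by positivity
      push_cast
      field_simp
    rw [tsum_congr hterm, tsum_neg]
    rfl
  rw [← hval]
  exact key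


lemma tricomi_zero {μ : ℝ} : tricomiC μ 0 = 1 / Real.Gamma (μ + 1) := by
  unfold tricomiC
  rw [tsum_eq_single 0]
  · norm_num
  · intro k hk
    rw [zero_pow hk]
    simp


lemma abs_bterm_le {μ : ℝ} (hμ : 0 ≤ μ) (x : ℝ) (k : ℕ) :
    ‖(-1:ℝ)^k * (k * x^k) / (k.factorial * Real.Gamma (μ + k + 2))‖
      ≤ (|x|+1) * (Real.exp 1 * (k * (|x|+1)^(k-1) / k.factorial)) := by
  have hg : 0 < Real.Gamma (μ + k + 2) := by
    have := gamma_pos' (by linarith : (0:ℝ) ≤ μ+1) k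
    rw [show (μ+1) + (k:ℝ) + 1 = μ + k + 2 by ring] at this
    exact this
  have hf : (0:ℝ) < k.factorial := by exact_mod_cast k.factorial_pos
  have he : 1 / Real.Gamma (μ + k + 2) ≤ Real.exp 1 := by
    have := inv_gamma_le (by linarith : (0:ℝ) ≤ μ+1) k
    rw [show (μ+1) + (k:ℝ) + 1 = μ + k + 2 by ring] at this
    exact this
  rw [Real.norm_eq_abs, abs_div, abs_mul, abs_pow, abs_neg, abs_one, one_pow, one_mul,
    abs_mul, Nat.abs_cast, abs_pow, abs_mul, Nat.abs_cast, abs_of_pos hg]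
  rw [div_le_iff₀ (by positivity)]
  rw [div_le_iff₀ hg] at he
  cases k with
  | zero => simp
  | succ n =>
    rw [Nat.add_sub_cancel]
    have hx1 : |x| ^ (n+1) ≤ (|x|+1)^n * (|x|+1) := by
      calc |x|^(n+1) ≤ (|x|+1)^(n+1) :=
            pow_le_pow_left₀ (abs_nonneg x) (by linarith [abs_nonneg x]) _
        _ = (|x|+1)^n * (|x|+1) := by rw [pow_succ]
    have hkpos : (0:ℝ) < (n:ℝ)+1 := by positivity
    calc (↑(n+1):ℝ) * |x|^(n+1)
        ≤ (↑(n+1) * ((|x|+1)^n * (|x|+1))) * (Real.exp 1 * Real.Gamma (μ + ↑(n+1) + 2)) := by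
          have h1' : (↑(n+1):ℝ) * |x|^(n+1) ≤ ↑(n+1) * ((|x|+1)^n * (|x|+1)) :=
            mul_le_mul_of_nonneg_left hx1 (by positivity)
          have h2' : (1:ℝ) ≤ Real.exp 1 * Real.Gamma (μ + ↑(n+1) + 2) := by
            simpa using he
          nlinarith [mul_le_mul_of_nonneg_left h2'
            (show (0:ℝ) ≤ ↑(n+1) * ((|x|+1)^n*(|x|+1)) by positivity)]
      _ = (|x|+1) * (Real.exp 1 * (↑(n+1) * (|x|+1)^n / ↑(n+1).factorial))
            * (↑(n+1).factorial * Real.Gamma (μ + ↑(n+1) + 2)) := by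
          have hfn : ((n+1).factorial : ℝ) ≠ 0 := by positivity
          field_simp


lemma tricomi_rec {μ : ℝ} (hμ : 0 ≤ μ) (x : ℝ) :
    tricomiC μ x = (μ+1) * tricomiC (μ+1) x - x * tricomiC (μ+2) x := by
  have hb : Summable (fun k : ℕ => (-1:ℝ)^k * (k * x^k) / (k.factorial * Real.Gamma (μ + k + 2))) := by
    apply Summable.of_norm
    exact Summable.of_nonneg_of_le (fun k => norm_nonneg _) (abs_bterm_le hμ x)
      ((summable_kRk (|x|+1)).mul_left (|x|+1))
  have h1 : Summable (fun k : ℕ => (μ+1) * ((-1:ℝ)^k * x^k / (k.factorial * Real.Gamma ((μ+1) + k + 1)))) :=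
    (summable_tricomi (by linarith : (0:ℝ) ≤ μ+1) x).mul_left _
  have hterm : ∀ k : ℕ, (-1:ℝ)^k * x^k / (k.factorial * Real.Gamma (μ + k + 1))
      = (μ+1) * ((-1:ℝ)^k * x^k / (k.factorial * Real.Gamma ((μ+1) + k + 1)))
        + (-1:ℝ)^k * (k * x^k) / (k.factorial * Real.Gamma (μ + k + 2)) := by
    intro k
    have hg1 := gamma_pos' hμ k
    have hΓ : Real.Gamma (μ + k + 2) = (μ + k + 1) * Real.Gamma (μ + k + 1) := by
      have := Real.Gamma_add_one (s := μ + k + 1) (by positivity)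
      rw [show μ + (k:ℝ) + 1 + 1 = μ + k + 2 by ring] at this
      exact this
    have hΓ2 : ((μ+1) + (k:ℝ) + 1) = μ + k + 2 := by ring
    rw [hΓ2, hΓ]
    have hf : ((k.factorial:ℝ)) ≠ 0 := by positivity
    have hμk : (μ + (k:ℝ) + 1) ≠ 0 := by positivity
    field_simp
    ring
  unfold tricomiC
  rw [tsum_congr hterm, h1.tsum_add hb, tsum_mul_left, sub_eq_add_neg]
  congr 1
  rw [hb.tsum_eq_zero_add]
  simp only [Nat.cast_zero, zero_mul, mul_zero, zero_div, zero_add]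
  have hterm2 : ∀ k : ℕ, (-1:ℝ)^(k+1) * (↑(k+1) * x^(k+1)) / ((k+1).factorial * Real.Gamma (μ + ↑(k+1) + 2))
      = -x * ((-1:ℝ)^k * x^k / (k.factorial * Real.Gamma ((μ+2) + k + 1))) := by
    intro k
    have harg : μ + (↑(k+1):ℝ) + 2 = (μ+2) + ↑k + 1 := by push_cast; ring
    rw [harg, pow_succ, pow_succ, Nat.factorial_succ]
    have hg := gamma_pos' (by linarith : (0:ℝ) ≤ μ + 2) k
    have hf : ((k.factorial:ℝ)) ≠ 0 := by positivity
    push_cast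
    field_simp
  rw [tsum_congr hterm2, tsum_mul_left]
  ring


lemma tricomi_tendsto_zero {μ : ℝ} (hμ : 0 < μ) :
    Tendsto (tricomiC μ) atTop (𝓝 0) := by
  set f : ℝ → ℝ := tricomiC μ with hfdef
  set F : ℝ → ℝ := tricomiC (μ+1) with hFdef
  set G : ℝ → ℝ := tricomiC (μ+2) with hGdef
  have hf : ∀ x : ℝ, HasDerivAt f (-(F x)) x := hasDerivAt_tricomi hμ.le
  have hF : ∀ x : ℝ, HasDerivAt F (-(G x)) x := by
    intro x
    have := hasDerivAt_tricomi (by linarith : (0:ℝ) ≤ μ+1) x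
    rwa [show μ+1+1 = μ+2 by ring] at this
  set p : ℝ := μ/2 + 1/4 with hp
  have hppos : 0 < p := by rw [hp]; linarith
  set c1 : ℝ := (1/4 - μ^2)/4 with hc1
  set c : ℝ := (μ^2+1)/4 with hc
  have hcpos : 0 < c := by rw [hc]; positivity
  set A : ℝ → ℝ := fun x => x^p * f x with hA
  set A1 : ℝ → ℝ := fun x => p * x^(p-1) * f x - x^p * F x with hA1
  set A2 : ℝ → ℝ := fun x => p*(p-1)*x^(p-2)*f x - 2*p*x^(p-1)*F x + x^p*G x with hA2
  have hdA : ∀ x : ℝ, 0 < x → HasDerivAt A (A1 x) x := by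
    intro x hx
    have h := (Real.hasDerivAt_rpow_const (p := p) (Or.inl hx.ne')).mul (hf x)
    convert h using 1 <;> try rfl
    rw [hA1]; ring
  have hdA1 : ∀ x : ℝ, 0 < x → HasDerivAt A1 (A2 x) x := by
    intro x hx
    have h1 := ((Real.hasDerivAt_rpow_const (p := p-1) (Or.inl hx.ne')).const_mul p).mul (hf x)
    have h2 := (Real.hasDerivAt_rpow_const (p := p) (Or.inl hx.ne')).mul (hF x)
    have h := h1.sub h2
    convert h using 1 <;> try rfl
    rw [hA2, show p-1-1 = p-2 by ring]
    ring
  -- the ODE satisfied by A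
  have hI : ∀ x : ℝ, 0 < x → x^2 * A2 x + (x/2) * A1 x + (x + c1) * A x = 0 := by
    intro x hx
    have hrec := tricomi_rec hμ.le x
    have hGval : G x = ((μ+1) * F x - f x)/x := by
      rw [eq_div_iff hx.ne']
      rw [← hFdef, ← hGdef, ← hfdef] at hrec
      linarith
    have hp1 : x^(p-1) = x^p / x := by
      rw [Real.rpow_sub hx, Real.rpow_one]
    have hp2 : x^(p-2) = x^p / x^2 := by
      rw [Real.rpow_sub hx, show ((2:ℝ)) = ((2:ℕ):ℝ) by norm_num, Real.rpow_natCast]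
    simp only [hA2, hA1, hA]
    rw [hGval, hp1, hp2, hp, hc1]
    field_simp
    ring
  set E : ℝ → ℝ := fun x => (A x)^2 + x * (A1 x)^2 with hE
  have hdE : ∀ x : ℝ, 0 < x → HasDerivAt E (-2*c1*(A x * A1 x)/x) x := by
    intro x hx
    have h1 := (hdA x hx).pow 2
    have h2 := (hasDerivAt_id x).mul ((hdA1 x hx).pow 2)
    have h := h1.add h2
    convert h using 1 <;> try rfl
    have hIx := hI x hx
    simp only [id, pow_one, Nat.cast_ofNat, Pi.pow_apply, show (2:ℕ) - 1 = 1 from rfl]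
    field_simp
    linear_combination (-2*A1 x) * hIx
  set φ : ℝ → ℝ := fun x => 2*c*x^(-(1/2):ℝ) with hφ
  set V : ℝ → ℝ := fun x => E x * Real.exp (φ x) with hV
  have hdV : ∀ x : ℝ, 0 < x → ∃ d, HasDerivAt V d x ∧ d ≤ 0 := by
    intro x hx
    have hexp : HasDerivAt (fun y => Real.exp (φ y))
        (Real.exp (φ x) * (2*c*(-(1/2)*x^((-(1/2):ℝ)-1)))) x := by
      exact (((Real.hasDerivAt_rpow_const (p := -(1/2)) (Or.inl hx.ne')).const_mul (2*c))).exp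
    have hd := (hdE x hx).mul hexp
    refine ⟨_, hd, ?_⟩
    set s : ℝ := Real.sqrt x with hs
    have hspos : 0 < s := Real.sqrt_pos.mpr hx
    have hs2 : s^2 = x := Real.sq_sqrt hx.le
    have hx32 : x^((-(1/2):ℝ)-1) = 1/(x*s) := by
      have h32 : x ^ ((3:ℝ)/2) = x * s := by
        rw [show (3:ℝ)/2 = 1 + 1/2 by norm_num, Real.rpow_add hx, Real.rpow_one,
          ← Real.sqrt_eq_rpow]
      rw [show ((-(1/2):ℝ))-1 = -((3:ℝ)/2) by norm_num, Real.rpow_neg hx.le, h32, one_div]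
    have hEnn : 0 ≤ E x := by
      simp only [hE]
      have := mul_nonneg hx.le (sq_nonneg (A1 x))
      nlinarith [sq_nonneg (A x)]
    have key : -2*c1*(A x*A1 x)/x * Real.exp (φ x)
        + E x * (Real.exp (φ x) * (2*c*(-(1/2)*x^((-(1/2):ℝ)-1)))) ≤ 0 := by
      rw [hx32]
      have hfac : -2*c1*(A x*A1 x)/x * Real.exp (φ x)
          + E x * (Real.exp (φ x) * (2*c*(-(1/2)*(1/(x*s)))))
          = Real.exp (φ x) * ((-2*c1*(A x*A1 x)*s - c * E x) / (x*s)) := by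
        field_simp
        ring
      rw [hfac]
      apply mul_nonpos_of_nonneg_of_nonpos (Real.exp_pos _).le
      apply div_nonpos_of_nonpos_of_nonneg _ (by positivity)
      have hcc1 : 0 ≤ c - c1 := by rw [hc, hc1]; nlinarith [sq_nonneg μ]
      have hcc2 : 0 ≤ c + c1 := by rw [hc, hc1]; nlinarith [sq_nonneg μ]
      have hEx : E x = (A x)^2 + s^2 * (A1 x)^2 := by
        simp only [hE]; rw [hs2]
      rw [hEx]
      nlinarith [sq_nonneg (A x + s*A1 x), sq_nonneg (A x - s*A1 x),
        mul_nonneg hcc1 (sq_nonneg (A x)), mul_nonneg hcc1 (sq_nonneg (s*A1 x)),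
        mul_nonneg hcc2 (sq_nonneg (A x)), mul_nonneg hcc2 (sq_nonneg (s*A1 x))]
    exact key
  have hVanti : AntitoneOn V (Set.Ici 1) := by
    apply antitoneOn_of_deriv_nonpos (convex_Ici 1)
    · intro x hx
      obtain ⟨d, hd, _⟩ := hdV x (lt_of_lt_of_le one_pos hx)
      exact hd.continuousAt.continuousWithinAt
    · rw [interior_Ici]
      intro x hx
      obtain ⟨d, hd, _⟩ := hdV x (lt_trans one_pos hx)
      exact hd.differentiableAt.differentiableWithinAt
    · rw [interior_Ici]
      intro x hx
      obtain ⟨d, hd, hd0⟩ := hdV x (lt_trans one_pos hx)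
      rw [hd.deriv]
      exact hd0
  have hbound : ∀ x : ℝ, 1 ≤ x → (A x)^2 ≤ V 1 := by
    intro x hx1
    have hx0 : 0 < x := lt_of_lt_of_le one_pos hx1
    have h1 : (A x)^2 ≤ E x := by
      simp only [hE]
      nlinarith [mul_nonneg hx0.le (sq_nonneg (A1 x))]
    have hE0 : 0 ≤ E x := by
      simp only [hE]
      nlinarith [sq_nonneg (A x), mul_nonneg hx0.le (sq_nonneg (A1 x))]
    have h2 : E x ≤ V x := by
      have hφ0 : 0 ≤ φ x := by
        simp only [hφ]
        have := Real.rpow_nonneg hx0.le (-(1/2):ℝ)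
        positivity
      have h3 : 1 ≤ Real.exp (φ x) := Real.one_le_exp hφ0
      calc E x = E x * 1 := (mul_one _).symm
        _ ≤ E x * Real.exp (φ x) := mul_le_mul_of_nonneg_left h3 hE0
    exact le_trans (le_trans h1 h2) (hVanti (Set.mem_Ici.mpr le_rfl) (Set.mem_Ici.mpr hx1) hx1)
  apply squeeze_zero_norm' (a := fun x => Real.sqrt (V 1) * x^(-p))
  · filter_upwards [eventually_ge_atTop (1:ℝ)] with x hx1
    have hx0 : 0 < x := lt_of_lt_of_le one_pos hx1
    have hAle : |A x| ≤ Real.sqrt (V 1) := Real.abs_le_sqrt (hbound x hx1)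
    have hxp : 0 < x^p := Real.rpow_pos_of_pos hx0 p
    have habs : |f x| = |A x| * x^(-p) := by
      rw [Real.rpow_neg hx0.le]
      simp only [hA]
      rw [abs_mul, abs_of_pos hxp]
      field_simp
    rw [Real.norm_eq_abs, habs]
    exact mul_le_mul_of_nonneg_right hAle (by positivity)
  · have h := (tendsto_rpow_neg_atTop hppos).const_mul (Real.sqrt (V 1))
    simpa using h


/-- For ν > 1, the improper integral ∫₀^∞ C_ν(x) dx equals 1/Γ(ν). -/
theorem stmt_15 (ν : ℝ) (hν : 1 < ν) :
    Tendsto (fun R : ℝ => ∫ x in (0 : ℝ)..R, tricomiC ν x) atTop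
      (𝓝 (1 / Real.Gamma ν)) := by
  have hν1 : (0:ℝ) ≤ ν - 1 := by linarith
  have hd : ∀ x : ℝ, HasDerivAt (fun y => -(tricomiC (ν-1) y)) (tricomiC ν x) x := by
    intro x
    have h := (hasDerivAt_tricomi hν1 x).neg
    rwa [show ν - 1 + 1 = ν by ring, neg_neg] at h
  have hcont : Continuous (tricomiC ν) := by
    rw [continuous_iff_continuousAt]
    intro x
    exact (hasDerivAt_tricomi (by linarith : (0:ℝ) ≤ ν) x).continuousAt
  have hint : ∀ R : ℝ, ∫ x in (0:ℝ)..R, tricomiC ν x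
      = 1 / Real.Gamma ν - tricomiC (ν-1) R := by
    intro R
    rw [intervalIntegral.integral_eq_sub_of_hasDerivAt (fun x _ => hd x)
      (hcont.intervalIntegrable 0 R)]
    have h0 : tricomiC (ν-1) 0 = 1 / Real.Gamma ν := by
      rw [tricomi_zero, show ν - 1 + 1 = ν by ring]
    rw [h0]
    ring
  have hlim : Tendsto (fun R : ℝ => 1 / Real.Gamma ν - tricomiC (ν-1) R) atTop
      (𝓝 (1 / Real.Gamma ν)) := by
    have h := (tendsto_const_nhds (x := 1 / Real.Gamma ν) (f := atTop (α := ℝ))).sub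
      (tricomi_tendsto_zero (by linarith : (0:ℝ) < ν - 1))
    simpa using h
  exact hlim.congr (fun R => (hint R).symm)
end
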